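/- If two abstract locations 𝔩₁ and 𝔩₂ on the heap predomain ℍ are independent, then their joint location 𝔩₁⊗𝔩₂, defined by (𝔩₁⊗𝔩₂)^R = 𝔩₁^R ∩ 𝔩₂^R, (𝔩₁⊗𝔩₂)^G = (𝔩₁^G ∪ 𝔩₂^G)^* (closure under composition), and (𝔩₁⊗𝔩₂)^F(h) = 𝔩₁^F(h) ∪ 𝔩₂^F(h), is again an abstract location, i.e. satisfies the three conditions relating rely, guarantee and footprint. -/
import Mathlib


/-- The raw data of an abstract location: a rely relation on heaps, a guarantee set of
heap functions, and a footprint. -/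
structure RawLoc (H L : Type) : Type where
  R : H → H → Prop
  G : Set (H → H)
  F : H → Set L

/-- An abstract location on heaps `H` (with locations `L`, values `V`, domain map
`dom` and lookup `look`): raw data subject to the rely/guarantee/footprint
conditions of the paper. -/
structure AbsLoc (H L V : Type) (dom : H → Set L) (look : H → L → V)
    extends RawLoc H L : Type where
  R_nonempty : ∃ h, R h h
  R_symm : ∀ {h h'}, R h h' → R h' h
  R_trans : ∀ {h h' h''}, R h h' → R h' h'' → R h h''
  G_comp : ∀ ι κ, ι ∈ G → κ ∈ G → (ι ∘ κ) ∈ G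
  rely_guarantee : ∀ ι ∈ G, ∀ {h h' : H}, R h h' →
    R (ι h) (ι h') ∧ R (ι h) (ι (ι h)) ∧ R (ι h') (ι (ι h'))
  footprint_rely : ∀ {h h' h1 h1' : H},
    (∀ l ∈ F h, look h1 l = look h l) → (∀ l ∈ F h', look h1' l = look h' l) →
    R h h' → R h1 h1'
  guarantee_local : ∀ ι ∈ G, ∀ h : H, dom h ⊆ dom (ι h) ∧
    ∀ l ∈ dom h, l ∉ F h → l ∉ F (ι h) ∧ look h l = look (ι h) l

/-- Independence of two abstract locations (stated on their raw data). -/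
def Indep {H L V : Type} (dom : H → Set L) (look : H → L → V)
    (l1 l2 : RawLoc H L) : Prop :=
  (∀ ι ∈ l1.G, ∀ h h', l1.R h h → l2.R h h' → l2.R (ι h) h') ∧
  (∀ ι ∈ l2.G, ∀ h h', l2.R h h → l1.R h h' → l1.R (ι h) h') ∧
  (∀ ι ∈ l1.G, ∀ h : H, ∀ l ∈ dom h, l ∉ l2.F h → l ∉ l2.F (ι h)) ∧
  (∀ ι ∈ l2.G, ∀ h : H, ∀ l ∈ dom h, l ∉ l1.F h → l ∉ l1.F (ι h)) ∧
  (∀ h1 h2, l1.R h1 h1 → l2.R h2 h2 → ∃ h, l1.R h h1 ∧ l2.R h h2)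

/-- Closure of a set of functions under composition. -/
inductive CompClosure {H : Type} (S : Set (H → H)) : (H → H) → Prop
  | base {f} : f ∈ S → CompClosure S f
  | comp {f g} : CompClosure S f → CompClosure S g → CompClosure S (f ∘ g)

/-- The joint location `𝔩₁ ⊗ 𝔩₂`: relies intersected, guarantees the composition
closure of the union, footprints united. -/
def jointRaw {H L : Type} (l1 l2 : RawLoc H L) : RawLoc H L where
  R h h' := l1.R h h' ∧ l2.R h h'
  G := {f | CompClosure (l1.G ∪ l2.G) f}
  F h := l1.F h ∪ l2.F h

namespace StmtAux

variable {H L V : Type} {dom : H → Set L} {look : H → L → V}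

/-- The joint rely relation. -/
def JR (l1 l2 : AbsLoc H L V dom look) (h h' : H) : Prop :=
  l1.R h h' ∧ l2.R h h'

variable (l1 l2 : AbsLoc H L V dom look)

theorem jsymm {h h'} (hr : JR l1 l2 h h') : JR l1 l2 h' h :=
  ⟨l1.R_symm hr.1, l2.R_symm hr.2⟩

theorem jtrans {a b c} (h1 : JR l1 l2 a b) (h2 : JR l1 l2 b c) : JR l1 l2 a c :=
  ⟨l1.R_trans h1.1 h2.1, l2.R_trans h1.2 h2.2⟩

theorem jreflL {h h'} (hr : JR l1 l2 h h') : JR l1 l2 h h :=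
  jtrans l1 l2 hr (jsymm l1 l2 hr)

theorem jreflR {h h'} (hr : JR l1 l2 h h') : JR l1 l2 h' h' :=
  jtrans l1 l2 (jsymm l1 l2 hr) hr

variable (hind : Indep dom look l1.toRawLoc l2.toRawLoc)

include hind

/-- Elements of `l1.G ∪ {id}` are invisible to `l2`'s rely. -/
theorem inv1 {κ} (hκ : κ ∈ l1.G ∨ κ = id) {h h'} (h1 : l1.R h h)
    (h2 : l2.R h h') : l2.R (κ h) h' := by
  rcases hκ with hκ | rfl
  · exact hind.1 κ hκ h h' h1 h2
  · exact h2

theorem inv2 {κ} (hκ : κ ∈ l2.G ∨ κ = id) {h h'} (h2 : l2.R h h)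
    (h1 : l1.R h h') : l1.R (κ h) h' := by
  rcases hκ with hκ | rfl
  · exact hind.2.1 κ hκ h h' h2 h1
  · exact h1

omit hind in
/-- rely-guarantee for `l1.G ∪ {id}`. -/
theorem rg1 {κ} (hκ : κ ∈ l1.G ∨ κ = id) {h h'} (hr : l1.R h h') :
    l1.R (κ h) (κ h') ∧ l1.R (κ h) (κ (κ h)) ∧ l1.R (κ h') (κ (κ h')) := by
  rcases hκ with hκ | rfl
  · exact l1.rely_guarantee κ hκ hr
  · exact ⟨hr, l1.R_trans hr (l1.R_symm hr), l1.R_trans (l1.R_symm hr) hr⟩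

omit hind in theorem rg2 {κ} (hκ : κ ∈ l2.G ∨ κ = id) {h h'} (hr : l2.R h h') :
    l2.R (κ h) (κ h') ∧ l2.R (κ h) (κ (κ h)) ∧ l2.R (κ h') (κ (κ h')) := by
  rcases hκ with hκ | rfl
  · exact l2.rely_guarantee κ hκ hr
  · exact ⟨hr, l2.R_trans hr (l2.R_symm hr), l2.R_trans (l2.R_symm hr) hr⟩

/-- `l1`-side guarantees preserve the joint rely. -/
theorem hatPres1 {κ} (hκ : κ ∈ l1.G ∨ κ = id) {h h'} (hr : JR l1 l2 h h') :
    JR l1 l2 (κ h) (κ h') := by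
  have a : l2.R (κ h) h' := inv1 l1 l2 hind hκ (jreflL l1 l2 hr).1 hr.2
  have b : l2.R (κ h') h' := inv1 l1 l2 hind hκ (jreflR l1 l2 hr).1 (jreflR l1 l2 hr).2
  exact ⟨(rg1 l1 hκ hr.1).1, l2.R_trans a (l2.R_symm b)⟩

theorem hatPres2 {κ} (hκ : κ ∈ l2.G ∨ κ = id) {h h'} (hr : JR l1 l2 h h') :
    JR l1 l2 (κ h) (κ h') := by
  have a : l1.R (κ h) h' := inv2 l1 l2 hind hκ (jreflL l1 l2 hr).2 hr.1
  have b : l1.R (κ h') h' := inv2 l1 l2 hind hκ (jreflR l1 l2 hr).2 (jreflR l1 l2 hr).1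
  exact ⟨l1.R_trans a (l1.R_symm b), (rg2 l2 hκ hr.2).1⟩

/-- step-idempotence for `l1`-side guarantees, w.r.t. the joint rely. -/
theorem hatStep1 {κ} (hκ : κ ∈ l1.G ∨ κ = id) {h} (hr : JR l1 l2 h h) :
    JR l1 l2 (κ h) (κ (κ h)) := by
  have c : l2.R (κ h) h := inv1 l1 l2 hind hκ hr.1 hr.2
  have cc : l2.R (κ h) (κ h) := l2.R_trans c (l2.R_symm c)
  have d : l2.R (κ (κ h)) (κ h) := inv1 l1 l2 hind hκ (rg1 l1 hκ hr.1).1 cc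
  exact ⟨(rg1 l1 hκ hr.1).2.1, l2.R_symm d⟩

theorem hatStep2 {κ} (hκ : κ ∈ l2.G ∨ κ = id) {h} (hr : JR l1 l2 h h) :
    JR l1 l2 (κ h) (κ (κ h)) := by
  have c : l1.R (κ h) h := inv2 l1 l2 hind hκ hr.2 hr.1
  have cc : l1.R (κ h) (κ h) := l1.R_trans c (l1.R_symm c)
  have d : l1.R (κ (κ h)) (κ h) := inv2 l1 l2 hind hκ (rg2 l2 hκ hr.2).1 cc
  exact ⟨l1.R_symm d, (rg2 l2 hκ hr.2).2.1⟩

/-- commutation (up to the joint rely) of the two sides' guarantees. -/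
theorem comm {κ μ} (hκ : κ ∈ l1.G ∨ κ = id) (hμ : μ ∈ l2.G ∨ μ = id) {p}
    (hp : JR l1 l2 p p) : JR l1 l2 (κ (μ p)) (μ (κ p)) := by
  have x1 : l1.R (μ p) p := inv2 l1 l2 hind hμ hp.2 hp.1
  have x2 : l1.R (κ (μ p)) (κ p) := (rg1 l1 hκ x1).1
  have y1 : l2.R (κ p) p := inv1 l1 l2 hind hκ hp.1 hp.2
  have y1r : l2.R (κ p) (κ p) := l2.R_trans y1 (l2.R_symm y1)
  have x3 : l1.R (μ (κ p)) (κ p) := inv2 l1 l2 hind hμ y1r (rg1 l1 hκ hp.1).1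
  have x1r : l1.R (μ p) (μ p) := l1.R_trans x1 (l1.R_symm x1)
  have y2 : l2.R (μ (κ p)) (μ p) := (rg2 l2 hμ y1).1
  have y3 : l2.R (κ (μ p)) (μ p) := inv1 l1 l2 hind hκ x1r (rg2 l2 hμ hp.2).1
  exact ⟨l1.R_trans x2 (l1.R_symm x3), l2.R_trans y3 (l2.R_symm y2)⟩

/-- step-idempotence for normal forms `κ₂ ∘ κ₁`. -/
theorem normStep {κ₁ κ₂} (hκ₁ : κ₁ ∈ l1.G ∨ κ₁ = id) (hκ₂ : κ₂ ∈ l2.G ∨ κ₂ = id)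
    {h} (hr : JR l1 l2 h h) :
    JR l1 l2 (κ₂ (κ₁ h)) (κ₂ (κ₁ (κ₂ (κ₁ h)))) := by
  have hu : JR l1 l2 (κ₁ h) (κ₁ h) := hatPres1 l1 l2 hind hκ₁ hr
  have hcomm : JR l1 l2 (κ₁ (κ₂ (κ₁ h))) (κ₂ (κ₁ (κ₁ h))) := comm l1 l2 hind hκ₁ hκ₂ hu
  have h1 : JR l1 l2 (κ₁ h) (κ₁ (κ₁ h)) := hatStep1 l1 l2 hind hκ₁ hr
  have h2 : JR l1 l2 (κ₂ (κ₁ h)) (κ₂ (κ₁ (κ₁ h))) := hatPres2 l1 l2 hind hκ₂ h1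
  have h3 : JR l1 l2 (κ₂ (κ₁ h)) (κ₁ (κ₂ (κ₁ h))) :=
    jtrans l1 l2 h2 (jsymm l1 l2 hcomm)
  have h4 : JR l1 l2 (κ₂ (κ₂ (κ₁ h))) (κ₂ (κ₁ (κ₂ (κ₁ h)))) := hatPres2 l1 l2 hind hκ₂ h3
  have h5 : JR l1 l2 (κ₂ (κ₁ h)) (κ₂ (κ₂ (κ₁ h))) := hatStep2 l1 l2 hind hκ₂ hu
  exact jtrans l1 l2 h5 h4

/-- every element of the composition closure has a normal form, up to the joint rely. -/
theorem nf {ι} (hι : CompClosure (l1.G ∪ l2.G) ι) :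
    ∃ κ₁ κ₂, (κ₁ ∈ l1.G ∨ κ₁ = id) ∧ (κ₂ ∈ l2.G ∨ κ₂ = id) ∧
      ∀ h h', JR l1 l2 h h' → JR l1 l2 (ι h) (κ₂ (κ₁ h')) := by
  induction hι with
  | @base f hf =>
    rcases hf with hf | hf
    · exact ⟨f, id, Or.inl hf, Or.inr rfl,
        fun h h' hr => hatPres1 l1 l2 hind (Or.inl hf) hr⟩
    · exact ⟨id, f, Or.inr rfl, Or.inl hf,
        fun h h' hr => hatPres2 l1 l2 hind (Or.inl hf) hr⟩
  | @comp σ τ hσ hτ ihσ ihτ =>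
    obtain ⟨κ₁, κ₂, hκ₁, hκ₂, hκ⟩ := ihσ
    obtain ⟨μ₁, μ₂, hμ₁, hμ₂, hμ⟩ := ihτ
    have hν₁ : κ₁ ∘ μ₁ ∈ l1.G ∨ κ₁ ∘ μ₁ = (id : H → H) := by
      rcases hκ₁ with hκ₁ | rfl <;> rcases hμ₁ with hμ₁ | rfl
      · exact Or.inl (l1.G_comp _ _ hκ₁ hμ₁)
      · exact Or.inl (by simpa [Function.comp_id] using hκ₁)
      · exact Or.inl (by simpa [Function.id_comp] using hμ₁)
      · exact Or.inr (by simp)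
    have hν₂ : κ₂ ∘ μ₂ ∈ l2.G ∨ κ₂ ∘ μ₂ = (id : H → H) := by
      rcases hκ₂ with hκ₂ | rfl <;> rcases hμ₂ with hμ₂ | rfl
      · exact Or.inl (l2.G_comp _ _ hκ₂ hμ₂)
      · exact Or.inl (by simpa [Function.comp_id] using hκ₂)
      · exact Or.inl (by simpa [Function.id_comp] using hμ₂)
      · exact Or.inr (by simp)
    refine ⟨κ₁ ∘ μ₁, κ₂ ∘ μ₂, hν₁, hν₂, ?_⟩
    intro h h' hr
    show JR l1 l2 (σ (τ h)) (κ₂ (μ₂ (κ₁ (μ₁ h'))))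
    have t1 : JR l1 l2 (τ h) (μ₂ (μ₁ h')) := hμ h h' hr
    have σpres : ∀ x y, JR l1 l2 x y → JR l1 l2 (σ x) (σ y) := fun x y hxy =>
      jtrans l1 l2 (hκ x y hxy) (jsymm l1 l2 (hκ y y (jreflR l1 l2 hxy)))
    have hq : JR l1 l2 (μ₂ (μ₁ h')) (μ₂ (μ₁ h')) := jreflR l1 l2 t1
    have t2 : JR l1 l2 (σ (τ h)) (σ (μ₂ (μ₁ h'))) := σpres _ _ t1
    have t3 : JR l1 l2 (σ (μ₂ (μ₁ h'))) (κ₂ (κ₁ (μ₂ (μ₁ h')))) := hκ _ _ hq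
    have hp : JR l1 l2 (μ₁ h') (μ₁ h') := hatPres1 l1 l2 hind hμ₁ (jreflR l1 l2 hr)
    have t4 : JR l1 l2 (κ₁ (μ₂ (μ₁ h'))) (μ₂ (κ₁ (μ₁ h'))) :=
      comm l1 l2 hind hκ₁ hμ₂ hp
    have t5 : JR l1 l2 (κ₂ (κ₁ (μ₂ (μ₁ h')))) (κ₂ (μ₂ (κ₁ (μ₁ h')))) :=
      hatPres2 l1 l2 hind hκ₂ t4
    exact jtrans l1 l2 (jtrans l1 l2 t2 t3) t5

/-- rely-guarantee for the joint location. -/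
theorem jointRG {ι} (hι : CompClosure (l1.G ∪ l2.G) ι) {h h'}
    (hr : JR l1 l2 h h') :
    JR l1 l2 (ι h) (ι h') ∧ JR l1 l2 (ι h) (ι (ι h)) ∧ JR l1 l2 (ι h') (ι (ι h')) := by
  obtain ⟨κ₁, κ₂, hκ₁, hκ₂, hκ⟩ := nf l1 l2 hind hι
  have pres : ∀ x y, JR l1 l2 x y → JR l1 l2 (ι x) (ι y) := fun x y hxy =>
    jtrans l1 l2 (hκ x y hxy) (jsymm l1 l2 (hκ y y (jreflR l1 l2 hxy)))
  have step : ∀ x, JR l1 l2 x x → JR l1 l2 (ι x) (ι (ι x)) := by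
    intro x hx
    have e1 : JR l1 l2 (ι x) (κ₂ (κ₁ x)) := hκ x x hx
    have e2 : JR l1 l2 (ι (ι x)) (κ₂ (κ₁ (ι x))) := hκ _ _ (jreflL l1 l2 e1)
    have e3 : JR l1 l2 (κ₂ (κ₁ (ι x))) (κ₂ (κ₁ (κ₂ (κ₁ x)))) :=
      hatPres2 l1 l2 hind hκ₂ (hatPres1 l1 l2 hind hκ₁ e1)
    have e4 : JR l1 l2 (κ₂ (κ₁ x)) (κ₂ (κ₁ (κ₂ (κ₁ x)))) := normStep l1 l2 hind hκ₁ hκ₂ hx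
    exact jsymm l1 l2
      (jtrans l1 l2 (jtrans l1 l2 (jtrans l1 l2 e2 e3) (jsymm l1 l2 e4)) (jsymm l1 l2 e1))
  exact ⟨pres _ _ hr, step _ (jreflL l1 l2 hr), step _ (jreflR l1 l2 hr)⟩

/-- locality of the joint guarantee. -/
theorem jointGL {ι} (hι : CompClosure (l1.G ∪ l2.G) ι) :
    ∀ h : H, dom h ⊆ dom (ι h) ∧
      ∀ l ∈ dom h, l ∉ (l1.F h ∪ l2.F h) →
        l ∉ (l1.F (ι h) ∪ l2.F (ι h)) ∧ look h l = look (ι h) l := by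
  induction hι with
  | @base f hf =>
    intro h
    rcases hf with hf | hf
    · have g := l1.guarantee_local f hf h
      refine ⟨g.1, fun l hl hnl => ?_⟩
      have hn1 : l ∉ l1.F h := fun c => hnl (Or.inl c)
      have hn2 : l ∉ l2.F h := fun c => hnl (Or.inr c)
      obtain ⟨a, b⟩ := g.2 l hl hn1
      refine ⟨?_, b⟩
      rintro (c | c)
      · exact a c
      · exact hind.2.2.1 f hf h l hl hn2 c
    · have g := l2.guarantee_local f hf h
      refine ⟨g.1, fun l hl hnl => ?_⟩
      have hn1 : l ∉ l1.F h := fun c => hnl (Or.inl c)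
      have hn2 : l ∉ l2.F h := fun c => hnl (Or.inr c)
      obtain ⟨a, b⟩ := g.2 l hl hn2
      refine ⟨?_, b⟩
      rintro (c | c)
      · exact hind.2.2.2.1 f hf h l hl hn1 c
      · exact a c
  | @comp f g hf hg ihf ihg =>
    intro h
    have Gg := ihg h
    have Gf := ihf (g h)
    refine ⟨Gg.1.trans Gf.1, fun l hl hnl => ?_⟩
    obtain ⟨na, nb⟩ := Gg.2 l hl hnl
    obtain ⟨na', nb'⟩ := Gf.2 l (Gg.1 hl) na
    exact ⟨na', nb.trans nb'⟩

end StmtAux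

/-- If abstract locations `𝔩₁`, `𝔩₂` are independent, then the joint data
`𝔩₁ ⊗ 𝔩₂` is again an abstract location. -/
theorem stmt_11 {H L V : Type} (dom : H → Set L) (look : H → L → V)
    (l1 l2 : AbsLoc H L V dom look)
    (hind : Indep dom look l1.toRawLoc l2.toRawLoc) :
    ∃ j : AbsLoc H L V dom look, j.toRawLoc = jointRaw l1.toRawLoc l2.toRawLoc := by
  open StmtAux in
  refine ⟨{ toRawLoc := jointRaw l1.toRawLoc l2.toRawLoc
            R_nonempty := ?_
            R_symm := fun hr => jsymm l1 l2 hr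
            R_trans := fun h1 h2 => jtrans l1 l2 h1 h2
            G_comp := fun ι κ hι hκ => CompClosure.comp hι hκ
            rely_guarantee := fun ι hι => fun {h h'} hr => jointRG l1 l2 hind hι hr
            footprint_rely := fun {h h' h1 h1'} ha hb hr =>
              ⟨l1.footprint_rely (fun l hl => ha l (Or.inl hl))
                  (fun l hl => hb l (Or.inl hl)) hr.1,
                l2.footprint_rely (fun l hl => ha l (Or.inr hl))
                  (fun l hl => hb l (Or.inr hl)) hr.2⟩
            guarantee_local := fun ι hι h => jointGL l1 l2 hind hι h }, rfl⟩
  obtain ⟨h1, hr1⟩ := l1.R_nonempty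
  obtain ⟨h2, hr2⟩ := l2.R_nonempty
  obtain ⟨h, hh1, hh2⟩ := hind.2.2.2.2 h1 h2 hr1 hr2
  exact ⟨h, l1.R_trans hh1 (l1.R_symm hh1), l2.R_trans hh2 (l2.R_symm hh2)⟩
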